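/- The global defensive alliance number of P₃ ∘ P₃ equals 4. -/

import Mathlib

/-- Lexicographic product of simple graphs. -/
def lexProd {α β : Type*} (G : SimpleGraph α) (H : SimpleGraph β) :
    SimpleGraph (α × β) where
  Adj x y := G.Adj x.1 y.1 ∨ (x.1 = y.1 ∧ H.Adj x.2 y.2)
  symm := ⟨by
    rintro x y (h | ⟨h1, h2⟩)
    · exact Or.inl h.symm
    · exact Or.inr ⟨h1.symm, h2.symm⟩⟩
  loopless := ⟨by
    rintro x (h | ⟨_, h2⟩)
    · exact G.irrefl h
    · exact H.irrefl h2⟩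

/-- Closed neighborhood N[v]. -/
def closedNbhd {α : Type*} (G : SimpleGraph α) (v : α) : Set α :=
  insert v (G.neighborSet v)

/-- A defensive alliance: every vertex of S is defended. -/
def IsDefensiveAlliance {α : Type*} (G : SimpleGraph α) (S : Set α) : Prop :=
  ∀ v ∈ S, ((closedNbhd G v) \ S).ncard ≤ ((closedNbhd G v) ∩ S).ncard

/-- A global defensive alliance: a defensive alliance which is also dominating. -/
def IsGDA {α : Type*} (G : SimpleGraph α) (S : Set α) : Prop :=
  IsDefensiveAlliance G S ∧ ∀ v, v ∈ S ∨ ∃ u ∈ S, G.Adj v u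

/-- The global defensive alliance number. -/
noncomputable def gdaNumber {α : Type*} (G : SimpleGraph α) : ℕ :=
  sInf {k | ∃ S : Set α, IsGDA G S ∧ S.ncard = k}

/-- Number of vertices of S in the j-th copy of G² (copies indexed 1,…,n). -/
noncomputable def copyCount {n m : ℕ} (S : Set (Fin n × Fin m)) (j : ℕ) : ℕ :=
  (S ∩ {p | (p.1 : ℕ) + 1 = j}).ncard


instance : DecidableRel (SimpleGraph.pathGraph 3).Adj := fun a b =>
  decidable_of_iff ((a:ℕ)+1 = (b:ℕ) ∨ (b:ℕ)+1 = (a:ℕ))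
    (by rw [SimpleGraph.pathGraph_adj])

abbrev GG := lexProd (SimpleGraph.pathGraph 3) (SimpleGraph.pathGraph 3)

instance : DecidableRel GG.Adj := fun _ _ =>
  inferInstanceAs (Decidable (_ ∨ _ ∧ _))

def cF (v : Fin 3 × Fin 3) : Finset (Fin 3 × Fin 3) := insert v (GG.neighborFinset v)

def F (T : Finset (Fin 3 × Fin 3)) : Prop :=
  (∀ v ∈ T, ((cF v) \ T).card ≤ ((cF v) ∩ T).card) ∧
    ∀ v : Fin 3 × Fin 3, v ∈ T ∨ ∃ u ∈ T, GG.Adj v u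

instance : DecidablePred F := fun T => by unfold F; infer_instance

lemma bridge (T : Finset (Fin 3 × Fin 3)) : IsGDA GG ↑T ↔ F T := by
  have hc : ∀ v, closedNbhd GG v = ↑(cF v) := by
    intro v
    rw [closedNbhd, cF, Finset.coe_insert, SimpleGraph.neighborFinset_def,
      Set.coe_toFinset]
  constructor
  · rintro ⟨h1, h2⟩
    refine ⟨fun v hv => ?_, fun v => by simpa using h2 v⟩
    have := h1 v (by simpa using hv)
    rwa [hc, ← Finset.coe_sdiff, ← Finset.coe_inter, Set.ncard_coe_finset,
      Set.ncard_coe_finset] at this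
  · rintro ⟨h1, h2⟩
    refine ⟨fun v hv => ?_, fun v => by simpa using h2 v⟩
    have := h1 v (by simpa using hv)
    rwa [hc, ← Finset.coe_sdiff, ← Finset.coe_inter, Set.ncard_coe_finset,
      Set.ncard_coe_finset]

set_option maxRecDepth 10000 in
lemma lower_bound_aux : ∀ T : Finset (Fin 3 × Fin 3), F T → 4 ≤ T.card := by decide

lemma upper_bound_aux : F {(0,0),(0,1),(0,2),(1,0)} := by decide

theorem stmt_8 :
    gdaNumber (lexProd (SimpleGraph.pathGraph 3) (SimpleGraph.pathGraph 3)) = 4 := by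
  have hT : IsGDA GG ↑({(0,0),(0,1),(0,2),(1,0)} : Finset (Fin 3 × Fin 3)) :=
    (bridge _).mpr upper_bound_aux
  apply le_antisymm
  · exact Nat.sInf_le ⟨_, hT, by rw [Set.ncard_coe_finset]; decide⟩
  · refine le_csInf ⟨4, _, hT, by rw [Set.ncard_coe_finset]; decide⟩ ?_
    rintro k ⟨S, hS, rfl⟩
    have hfin : S.Finite := Set.toFinite S
    have hSe : S = ↑hfin.toFinset := hfin.coe_toFinset.symm
    rw [hSe, Set.ncard_coe_finset]
    exact lower_bound_aux _ ((bridge _).mp (hSe ▸ hS))
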